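/- If a real number x is irrational and its continued fraction expansion is eventually periodic, then x is a quadratic irrational, i.e., x is a root of a quadratic polynomial Ax² + Bx + C with integer coefficients A ≠ 0, B, C. -/

import Mathlib

/-- The sequence of complete quotients of the continued fraction algorithm. -/
noncomputable def cfX (x : ℝ) : ℕ → ℝ
  | 0 => x
  | n + 1 =>
    if cfX x n - ⌊cfX x n⌋ = 0 then 0 else 1 / (cfX x n - ⌊cfX x n⌋)

/-- The partial quotients (continued fraction expansion) of a real number. -/
noncomputable def cfA (x : ℝ) (n : ℕ) : ℤ := ⌊cfX x n⌋

lemma cfX_succ_def (z : ℝ) (n : ℕ) :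
    cfX z (n + 1) = if cfX z n - ⌊cfX z n⌋ = 0 then 0 else 1 / (cfX z n - ⌊cfX z n⌋) := rfl

lemma cfA_def (z : ℝ) (n : ℕ) : cfA z n = ⌊cfX z n⌋ := rfl

lemma cfX_irrational (x : ℝ) (hx : Irrational x) : ∀ n, Irrational (cfX x n)
  | 0 => hx
  | n + 1 => by
    have ih := cfX_irrational x hx n
    have hf : Irrational (cfX x n - ⌊cfX x n⌋) := Irrational.sub_intCast ih _
    have hne : cfX x n - ⌊cfX x n⌋ ≠ 0 := by
      intro h
      exact hf ⟨0, by rw [h]; norm_num⟩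
    rw [cfX_succ_def, if_neg hne, one_div]
    exact hf.inv

lemma frac_pos (x : ℝ) (hx : Irrational x) (n : ℕ) : 0 < cfX x n - ⌊cfX x n⌋ := by
  have hf : Irrational (cfX x n - ⌊cfX x n⌋) := Irrational.sub_intCast (cfX_irrational x hx n) _
  have hne : cfX x n - ⌊cfX x n⌋ ≠ 0 := by
    intro h; exact hf ⟨0, by rw [h]; norm_num⟩
  have h0 : (0:ℝ) ≤ cfX x n - ⌊cfX x n⌋ := by
    have := Int.floor_le (cfX x n); linarith
  exact lt_of_le_of_ne h0 (Ne.symm hne)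

lemma frac_lt_one (x : ℝ) (n : ℕ) : cfX x n - ⌊cfX x n⌋ < 1 := by
  have := Int.lt_floor_add_one (cfX x n); linarith

lemma cfX_succ (x : ℝ) (hx : Irrational x) (n : ℕ) :
    cfX x (n + 1) = 1 / (cfX x n - (cfA x n : ℝ)) := by
  rw [cfX_succ_def, if_neg (ne_of_gt (frac_pos x hx n)), cfA_def]

lemma cfX_succ_gt_one (x : ℝ) (hx : Irrational x) (n : ℕ) : 1 < cfX x (n + 1) := by
  rw [cfX_succ x hx n, cfA_def]
  have h1 := frac_pos x hx n
  have h2 := frac_lt_one x n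
  rw [lt_div_iff₀ h1]
  linarith

lemma cfX_rel (x : ℝ) (hx : Irrational x) (n : ℕ) :
    cfX x n = (cfA x n : ℝ) + 1 / cfX x (n + 1) := by
  rw [cfX_succ x hx n, one_div_one_div, cfA_def]
  ring

lemma cfA_succ_ge_one (x : ℝ) (hx : Irrational x) (n : ℕ) : 1 ≤ cfA x (n + 1) := by
  rw [cfA_def]
  exact Int.le_floor.2 (by exact_mod_cast (cfX_succ_gt_one x hx n).le)

lemma cfX_shift (x : ℝ) (m : ℕ) : ∀ n, cfX x (m + n) = cfX (cfX x m) n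
  | 0 => rfl
  | n + 1 => by
    rw [show m + (n + 1) = (m + n) + 1 from rfl, cfX_succ_def, cfX_succ_def,
      cfX_shift x m n]

lemma cfA_shift (x : ℝ) (m n : ℕ) : cfA (cfX x m) n = cfA x (m + n) := by
  rw [cfA_def, cfA_def, cfX_shift]

/-- Two irrationals with the same continued fraction digits are equal. -/
lemma cf_unique (y z : ℝ) (hy : Irrational y) (hz : Irrational z)
    (h : ∀ n, cfA y n = cfA z n) : y = z := by
  -- one-step contraction
  have key : ∀ n, |cfX y n - cfX z n|
      = |cfX y (n + 1) - cfX z (n + 1)| / (cfX y (n + 1) * cfX z (n + 1)) := by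
    intro n
    have h1 := cfX_rel y hy n
    have h2 := cfX_rel z hz n
    have hy1 := cfX_succ_gt_one y hy n
    have hz1 := cfX_succ_gt_one z hz n
    have hy0 : cfX y (n+1) ≠ 0 := by linarith
    have hz0 : cfX z (n+1) ≠ 0 := by linarith
    have hpos : 0 < cfX y (n+1) * cfX z (n+1) := by nlinarith
    rw [h1, h2, h n, add_sub_add_left_eq_sub]
    rw [div_sub_div 1 1 hy0 hz0, abs_div, abs_of_pos hpos]
    congr 1
    rw [one_mul, mul_one, abs_sub_comm]
  -- two-step: product of next two complete quotients is ≥ 2 for each number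
  have pair : ∀ (w : ℝ) (hw : Irrational w) (n : ℕ),
      2 ≤ cfX w (n + 1) * cfX w (n + 2) := by
    intro w hw n
    have hrel := cfX_rel w hw (n + 1)
    have ha := cfA_succ_ge_one w hw n
    have ha' : (1 : ℝ) ≤ (cfA w (n + 1) : ℝ) := by exact_mod_cast ha
    have hw2 : 1 < cfX w (n + 2) := cfX_succ_gt_one w hw (n + 1)
    have hw2' : cfX w (n + 2) ≠ 0 := by linarith
    have : cfX w (n+1) * cfX w (n+2) = (cfA w (n+1) : ℝ) * cfX w (n+2) + 1 := by
      rw [hrel]; field_simp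
    rw [this]
    nlinarith
  have dstep : ∀ n, |cfX y n - cfX z n| ≤ |cfX y (n + 2) - cfX z (n + 2)| / 4 := by
    intro n
    have k1 := key n
    have k2 := key (n + 1)
    have hy1 := cfX_succ_gt_one y hy n
    have hz1 := cfX_succ_gt_one z hz n
    have hy2 := cfX_succ_gt_one y hy (n + 1)
    have hz2 := cfX_succ_gt_one z hz (n + 1)
    have hpy := pair y hy n
    have hpz := pair z hz n
    have habs : (0:ℝ) ≤ |cfX y (n + 2) - cfX z (n + 2)| := abs_nonneg _
    have hP : (4:ℝ) ≤ (cfX y (n+1) * cfX z (n+1)) * (cfX y (n+2) * cfX z (n+2)) := by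
      nlinarith
    rw [k1, k2]
    rw [div_div, div_le_div_iff₀ (by nlinarith) (by norm_num)]
    nlinarith
  -- iterate
  have iter : ∀ m : ℕ, |y - z| ≤ |cfX y (2 * m) - cfX z (2 * m)| / 4 ^ m := by
    intro m
    induction m with
    | zero => simp [cfX]
    | succ m ih =>
      have h1 := dstep (2 * m)
      have h2 : (2 * m) + 2 = 2 * (m + 1) := by ring
      rw [h2] at h1
      calc |y - z| ≤ |cfX y (2 * m) - cfX z (2 * m)| / 4 ^ m := ih
        _ ≤ (|cfX y (2 * (m+1)) - cfX z (2 * (m+1))| / 4) / 4 ^ m := by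
            apply div_le_div_of_nonneg_right h1 (by positivity) |>.trans_eq rfl
        _ = |cfX y (2 * (m+1)) - cfX z (2 * (m+1))| / 4 ^ (m + 1) := by
            rw [div_div, pow_succ]; ring_nf
  have dbound : ∀ n, |cfX y n - cfX z n| ≤ 1 := by
    intro n
    have hfy1 := Int.floor_le (cfX y n)
    have hfy2 := Int.lt_floor_add_one (cfX y n)
    have hfz1 := Int.floor_le (cfX z n)
    have hfz2 := Int.lt_floor_add_one (cfX z n)
    have hfl : ⌊cfX y n⌋ = ⌊cfX z n⌋ := h n
    rw [hfl] at hfy1 hfy2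
    rw [abs_sub_le_iff]
    constructor <;> linarith
  have hle : ∀ m : ℕ, |y - z| ≤ (1/4 : ℝ) ^ m := by
    intro m
    calc |y - z| ≤ |cfX y (2*m) - cfX z (2*m)| / 4 ^ m := iter m
      _ ≤ 1 / 4 ^ m := by
          apply div_le_div_of_nonneg_right (dbound _) (by positivity) |>.trans_eq rfl
      _ = (1/4 : ℝ) ^ m := by rw [div_pow, one_pow]
  by_contra hne
  have hpos : 0 < |y - z| := abs_pos.2 (sub_ne_zero.2 hne)
  obtain ⟨m, hm⟩ := exists_pow_lt_of_lt_one hpos (by norm_num : (1/4 : ℝ) < 1)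
  exact absurd (hle m) (not_le.2 hm)

/-- Forward Möbius relation between `cfX x k` and later complete quotients. -/
lemma mobius (x : ℝ) (hx : Irrational x) (k : ℕ) : ∀ j : ℕ,
    ∃ α β γ δ : ℤ, 1 ≤ γ ∧ 0 ≤ δ ∧
      cfX x k * ((γ : ℝ) * cfX x (k + j + 1) + (δ : ℝ))
        = (α : ℝ) * cfX x (k + j + 1) + (β : ℝ)
  | 0 => by
    refine ⟨cfA x k, 1, 1, 0, le_refl 1, le_refl 0, ?_⟩
    have hrel := cfX_rel x hx k
    have h1 := cfX_succ_gt_one x hx k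
    have h0 : cfX x (k + 1) ≠ 0 := by linarith
    rw [hrel]
    push_cast
    field_simp
    ring
  | j + 1 => by
    obtain ⟨α, β, γ, δ, hγ, hδ, heq⟩ := mobius x hx k j
    set W := cfX x (k + j + 2) with hW
    have hidx : k + j + 1 + 1 = k + j + 2 := rfl
    have hrel := cfX_rel x hx (k + j + 1)
    rw [hidx] at hrel
    have hW1 : 1 < W := by rw [hW, ← hidx]; exact cfX_succ_gt_one x hx (k + j + 1)
    have hW0 : W ≠ 0 := by linarith
    set a := cfA x (k + j + 1) with ha
    refine ⟨α * a + β, α, γ * a + δ, γ, ?_, by linarith, ?_⟩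
    · have ha1 : 1 ≤ a := cfA_succ_ge_one x hx (k + j)
      nlinarith
    · have hidx2 : k + (j + 1) + 1 = k + j + 2 := by omega
      rw [hidx2]
      rw [hrel] at heq
      have heqW := congrArg (fun t => t * W) heq
      field_simp at heqW
      push_cast
      have h' : cfX x (k + j + 2) * (cfX x (k + j + 2))⁻¹ = 1 := mul_inv_cancel₀ hW0
      linear_combination cfX x (k + j + 2) * heqW - (cfX x k * (γ : ℝ) - (α : ℝ)) * h'

/-- Backward step: if a complete quotient is a quadratic irrational, so is the previous one. -/
lemma backstep (x : ℝ) (hx : Irrational x) (n : ℕ)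
    (h : ∃ A B C : ℤ, A ≠ 0 ∧
      (A : ℝ) * (cfX x (n+1)) ^ 2 + (B : ℝ) * (cfX x (n+1)) + (C : ℝ) = 0) :
    ∃ A B C : ℤ, A ≠ 0 ∧
      (A : ℝ) * (cfX x n) ^ 2 + (B : ℝ) * (cfX x n) + (C : ℝ) = 0 := by
  obtain ⟨A, B, C, hA, h⟩ := h
  have hsucc := cfX_succ x hx n
  have hf : (0:ℝ) < cfX x n - (cfA x n : ℝ) := by
    rw [cfA_def]; exact frac_pos x hx n
  have hf0 : cfX x n - (cfA x n : ℝ) ≠ 0 := ne_of_gt hf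
  rw [hsucc] at h
  field_simp at h
  have hsub : (A : ℝ) + (B : ℝ) * (cfX x n - (cfA x n : ℝ))
      + (C : ℝ) * (cfX x n - (cfA x n : ℝ)) ^ 2 = 0 := by
    have hfac : (cfX x n - (cfA x n : ℝ)) * ((A : ℝ) + (B : ℝ) * (cfX x n - (cfA x n : ℝ))
        + (C : ℝ) * (cfX x n - (cfA x n : ℝ)) ^ 2) = 0 := by linear_combination (cfX x n - (cfA x n : ℝ)) * h
    rcases mul_eq_zero.1 hfac with h' | h'
    · exact absurd h' hf0
    · exact h'
  by_cases hC : C = 0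
  · subst hC
    -- linear in u
    push_cast at hsub
    have hlin : (B : ℝ) * cfX x n + ((A : ℝ) - (B : ℝ) * (cfA x n : ℝ)) = 0 := by
      linear_combination hsub
    by_cases hB : B = 0
    · exfalso
      apply hA
      rw [hB] at hlin
      push_cast at hlin
      have : (A : ℝ) = 0 := by linarith
      exact_mod_cast this
    · exfalso
      apply cfX_irrational x hx n
      refine ⟨((B * cfA x n - A : ℤ) : ℚ) / ((B : ℤ) : ℚ), ?_⟩
      have hB' : (B : ℝ) ≠ 0 := Int.cast_ne_zero.2 hB
      push_cast
      rw [div_eq_iff hB']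
      push_cast at hlin ⊢
      linarith
  · refine ⟨C, B - 2 * C * cfA x n, A - B * cfA x n + C * (cfA x n) ^ 2, hC, ?_⟩
    push_cast
    linear_combination hsub

lemma descend (x : ℝ) (hx : Irrational x) : ∀ j : ℕ,
    (∃ A B C : ℤ, A ≠ 0 ∧
      (A : ℝ) * (cfX x j) ^ 2 + (B : ℝ) * (cfX x j) + (C : ℝ) = 0) →
    ∃ A B C : ℤ, A ≠ 0 ∧ (A : ℝ) * x ^ 2 + (B : ℝ) * x + (C : ℝ) = 0
  | 0 => fun h => h
  | j + 1 => fun h => descend x hx j (backstep x hx j h)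

/-- Eventually periodic continued fraction of an irrational implies quadratic irrational. -/
theorem eventually_periodic_cf_quadratic (x : ℝ) (hx : Irrational x)
    (hper : ∃ k p : ℕ, 1 ≤ p ∧ ∀ n : ℕ, k ≤ n → cfA x (n + p) = cfA x n) :
    ∃ A B C : ℤ, A ≠ 0 ∧ (A : ℝ) * x ^ 2 + (B : ℝ) * x + (C : ℝ) = 0 := by
  obtain ⟨k, p, hp, hper⟩ := hper
  -- the complete quotient at k is periodic: cfX x k = cfX x (k + p)
  have hy : Irrational (cfX x k) := cfX_irrational x hx k
  have hz : Irrational (cfX x (k + p)) := cfX_irrational x hx (k + p)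
  have heqd : ∀ n, cfA (cfX x k) n = cfA (cfX x (k + p)) n := by
    intro n
    rw [cfA_shift, cfA_shift]
    have h1 : k + p + n = (k + n) + p := by ring
    rw [h1]
    exact (hper (k + n) (Nat.le_add_right k n)).symm
  have hfix : cfX x k = cfX x (k + p) := cf_unique _ _ hy hz heqd
  -- Möbius relation at j = p - 1
  obtain ⟨α, β, γ, δ, hγ, hδ, heq⟩ := mobius x hx k (p - 1)
  have hidx : k + (p - 1) + 1 = k + p := by omega
  rw [hidx, ← hfix] at heq
  apply descend x hx k
  refine ⟨γ, δ - α, -β, by omega, ?_⟩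
  push_cast
  linear_combination heq
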